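/- Let f(ε) = (1+ε)·log(1+ε) − ε for ε > −1. For every real t > 0 and every 0 < ε < 1, e^{−t} · Σ_{k ∈ ℕ, k ≤ (1−ε)t} t^k/k! ≤ exp(−f(−ε)·t). -/
import Mathlib


/-- `f(ε) = (1+ε)·log(1+ε) − ε`. -/
noncomputable def chernoffRate (ε : ℝ) : ℝ := (1 + ε) * Real.log (1 + ε) - ε

lemma tsum_pow_div_factorial' (x : ℝ) :
    ∑' n : ℕ, x ^ n / (Nat.factorial n : ℝ) = Real.exp x := by
  rw [Real.exp_eq_exp_ℝ, NormedSpace.exp_eq_tsum_div]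

/-- Lower-tail concentration of the Poisson weights: for `t > 0` and `0 < ε < 1`,
`e^{−t} Σ_{k ≤ (1−ε)t} t^k/k! ≤ exp(−f(−ε) t)`. -/
theorem heat_kernel_lower_tail (t : ℝ) (ht : 0 < t) (ε : ℝ) (hε0 : 0 < ε) (hε1 : ε < 1) :
    Real.exp (-t) * (∑' k : ℕ, if (k : ℝ) ≤ (1 - ε) * t then t ^ k / (Nat.factorial k : ℝ) else 0)
      ≤ Real.exp (-(chernoffRate (-ε) * t)) := by
  have h1ε : (0:ℝ) < 1 - ε := by linarith
  set a := (1 - ε) * t with ha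
  set s := -Real.log (1 - ε) with hs
  have hes : Real.exp (-s) = 1 - ε := by rw [hs, neg_neg, Real.exp_log h1ε]
  have hs0 : 0 < s := by
    rw [hs, neg_pos]
    exact Real.log_neg h1ε (by linarith)
  have hg : Summable (fun k : ℕ =>
      Real.exp (s * a) * (((1 - ε) * t) ^ k / (Nat.factorial k : ℝ))) :=
    (Real.summable_pow_div_factorial _).mul_left _
  have hpoint : ∀ k : ℕ,
      (if (k : ℝ) ≤ a then t ^ k / (Nat.factorial k : ℝ) else 0)
        ≤ Real.exp (s * a) * (((1 - ε) * t) ^ k / (Nat.factorial k : ℝ)) := by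
    intro k
    have heq : Real.exp (s * a) * (((1 - ε) * t) ^ k / (Nat.factorial k : ℝ))
        = Real.exp (s * (a - k)) * (t ^ k / (Nat.factorial k : ℝ)) := by
      rw [mul_pow, ← hes, ← Real.exp_nat_mul,
        show s * (a - (k : ℝ)) = s * a + (k : ℝ) * -s by ring, Real.exp_add]
      ring
    rw [heq]
    by_cases hk : (k : ℝ) ≤ a
    · simp only [hk, if_true]
      nth_rewrite 1 [← one_mul (t ^ k / (Nat.factorial k : ℝ))]
      apply mul_le_mul_of_nonneg_right
      · exact Real.one_le_exp (mul_nonneg hs0.le (by linarith))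
      · positivity
    · simp only [hk, if_false]
      positivity
  have hf : Summable (fun k : ℕ =>
      if (k : ℝ) ≤ a then t ^ k / (Nat.factorial k : ℝ) else 0) := by
    apply Summable.of_nonneg_of_le _ hpoint hg
    intro k
    by_cases hk : (k : ℝ) ≤ a <;> simp [hk] <;> positivity
  have hle := Summable.tsum_le_tsum hpoint hf hg
  have htsum : (∑' k : ℕ, Real.exp (s * a) * (((1 - ε) * t) ^ k / (Nat.factorial k : ℝ)))
      = Real.exp (s * a) * Real.exp ((1 - ε) * t) := by
    rw [tsum_mul_left, tsum_pow_div_factorial']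
  rw [htsum] at hle
  calc Real.exp (-t) * (∑' k : ℕ, if (k : ℝ) ≤ a then t ^ k / (Nat.factorial k : ℝ) else 0)
      ≤ Real.exp (-t) * (Real.exp (s * a) * Real.exp ((1 - ε) * t)) := by
        apply mul_le_mul_of_nonneg_left hle (Real.exp_nonneg _)
    _ = Real.exp (-(chernoffRate (-ε) * t)) := by
        rw [← Real.exp_add, ← Real.exp_add]
        congr 1
        have hlog : Real.log (1 + -ε) = Real.log (1 - ε) := by ring_nf
        simp only [chernoffRate, hlog, hs, ha]
        ring
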